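/- Let (d;a) be a regular pair with d ∈ ℕ₊^c, a ∈ ℕ₊^{n+1}, and let p be a prime. Then the pair (d(p)/p ; a(p)/p), obtained by taking the entries of d and a divisible by p and dividing them by p, is again regular. -/

import Mathlib

open Finset

/-- (d;a) is regular: for every m > 1, at least as many d's as a's are divisible by m. -/
def Regular {c n : ℕ} (d : Fin c → ℕ) (a : Fin n → ℕ) : Prop :=
  ∀ m : ℕ, 1 < m →
    (univ.filter fun i => m ∣ a i).card ≤ (univ.filter fun j => m ∣ d j).card

theorem stmt1 {c n : ℕ} (p : ℕ) (hp : p.Prime)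
    (d : Fin c → ℕ) (a : Fin (n + 1) → ℕ)
    (hd : ∀ j, 0 < d j) (ha : ∀ i, 0 < a i)
    (hreg : Regular d a) :
    ∀ m : ℕ, 1 < m →
      (univ.filter fun i => p ∣ a i ∧ m ∣ a i / p).card ≤
      (univ.filter fun j => p ∣ d j ∧ m ∣ d j / p).card := by
  intro m hm
  have key : ∀ x : ℕ, (p ∣ x ∧ m ∣ x / p) ↔ p * m ∣ x := by
    intro x
    constructor
    · rintro ⟨h1, h2⟩
      exact (Nat.dvd_div_iff_mul_dvd h1).mp h2
    · intro h
      have h1 : p ∣ x := dvd_of_mul_right_dvd h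
      exact ⟨h1, (Nat.dvd_div_iff_mul_dvd h1).mpr h⟩
  simp_rw [key]
  exact hreg (p * m) (one_lt_mul_of_lt_of_le hp.one_lt (le_of_lt hm))
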